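/- Let ξ^1, …, ξ^M be tangent solutions, each ξ^a = (ξ^a_1,…,ξ^a_N), and let 𝒲 be the associated discrete multi-Wroński matrix for the partition M = m_1 + … + m_N. Fix k ∈ {1,…,N} and let 𝒲̃ be the M×M matrix obtained from 𝒲 by replacing the last row of the k-th block, (Δ_k^{m_k−1} ξ^1_k, …, Δ_k^{m_k−1} ξ^M_k), by (T_k^{−1} Δ_k^{m_k} ξ^1_k, …, T_k^{−1} Δ_k^{m_k} ξ^M_k). Then Δ_k(det 𝒲) = T_k(det 𝒲̃), i.e., for every n ∈ ℤ^N, det 𝒲(n + e_k) − det 𝒲(n) = det 𝒲̃(n + e_k). -/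

import Mathlib

noncomputable section

/-- Shift operator `T_j`: `(T_j f)(n) = f(n + e_j)`. -/
def T {N : ℕ} (j : Fin N) (f : (Fin N → ℤ) → ℝ) : (Fin N → ℤ) → ℝ :=
  fun n => f (n + Pi.single j 1)

/-- Difference operator `Δ_j = T_j − 1`. -/
def Δ {N : ℕ} (j : Fin N) (f : (Fin N → ℤ) → ℝ) : (Fin N → ℤ) → ℝ :=
  fun n => f (n + Pi.single j 1) - f n

/-- The discrete multi-Wroński matrix `𝒲(n)` of the `M = m_1 + ⋯ + m_N` tangent
solutions `ξ^a` (`a` ranges over the canonical `M`-element index set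
`Σ j : Fin N, Fin (m j)`): its row `(j, p)` is `(Δ_j^p ξ^a_j(n))_a`. -/
def Wmat {N : ℕ} (m : Fin N → ℕ)
    (ξ : (Σ j : Fin N, Fin (m j)) → Fin N → (Fin N → ℤ) → ℝ) (n : Fin N → ℤ) :
    Matrix (Σ j : Fin N, Fin (m j)) (Σ j : Fin N, Fin (m j)) ℝ :=
  Matrix.of fun r a => (Δ r.1)^[(r.2 : ℕ)] (ξ a r.1) n

/-- The index `(k, m_k − 1)` of the last row of the `k`-th block. -/
def lastRow {N : ℕ} (m : Fin N → ℕ) (k : Fin N) (h : 0 < m k) :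
    Σ j : Fin N, Fin (m j) :=
  ⟨k, ⟨m k - 1, Nat.sub_lt h Nat.one_pos⟩⟩

/-! ### Auxiliary lemmas about `T` and `Δ` -/

section Ops

variable {N : ℕ}

lemma delta_add (j : Fin N) (f g : (Fin N → ℤ) → ℝ) :
    Δ j (f + g) = Δ j f + Δ j g := by
  funext n; simp [Δ]; ring

lemma delta_zero (j : Fin N) : Δ j (0 : (Fin N → ℤ) → ℝ) = 0 := by
  funext n; simp [Δ]

lemma T_zero (j : Fin N) : T j (0 : (Fin N → ℤ) → ℝ) = 0 := by
  funext n; simp [T]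

lemma delta_mul (j : Fin N) (f g : (Fin N → ℤ) → ℝ) :
    Δ j (f * g) = Δ j f * g + T j f * Δ j g := by
  funext n; simp [Δ, T]; ring

lemma delta_iterate_add (j : Fin N) (p : ℕ) (f g : (Fin N → ℤ) → ℝ) :
    (Δ j)^[p] (f + g) = (Δ j)^[p] f + (Δ j)^[p] g := by
  induction p with
  | zero => simp
  | succ p ih =>
    rw [Function.iterate_succ_apply', Function.iterate_succ_apply',
      Function.iterate_succ_apply', ih, delta_add]

lemma T_delta_comm (j k : Fin N) (f : (Fin N → ℤ) → ℝ) :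
    T k (Δ j f) = Δ j (T k f) := by
  funext n
  simp only [Δ, T]
  rw [add_right_comm]

lemma T_delta_iterate_comm (j k : Fin N) (p : ℕ) (f : (Fin N → ℤ) → ℝ) :
    T k ((Δ j)^[p] f) = (Δ j)^[p] (T k f) := by
  induction p with
  | zero => simp
  | succ p ih =>
    rw [Function.iterate_succ_apply', Function.iterate_succ_apply',
      T_delta_comm, ih]

lemma T_eq_add_delta (k : Fin N) (f : (Fin N → ℤ) → ℝ) :
    T k f = f + Δ k f := by
  funext n; simp [T, Δ]

lemma delta_sum (j : Fin N) {α : Type*} (s : Finset α) (f : α → (Fin N → ℤ) → ℝ) :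
    Δ j (∑ i ∈ s, f i) = ∑ i ∈ s, Δ j (f i) := by
  funext n
  simp [Δ, Finset.sum_apply, Finset.sum_sub_distrib]

/-- shifting a `p`-th difference in the `k`-direction. -/
lemma iterate_shift (k : Fin N) (p : ℕ) (g : (Fin N → ℤ) → ℝ) (n : Fin N → ℤ) :
    (Δ k)^[p] g (n + Pi.single k 1) = (Δ k)^[p] g n + (Δ k)^[p + 1] g n := by
  rw [Function.iterate_succ_apply']
  simp [Δ]

end Ops

/-! ### Existence of the reduction coefficients (discrete Leibniz rule) -/

lemma exists_coeffs {N : ℕ} (Q : Fin N → Fin N → (Fin N → ℤ) → ℝ) (j k : Fin N) (p : ℕ) :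
    ∃ (u : (Fin N → ℤ) → ℝ) (v : ℕ → (Fin N → ℤ) → ℝ),
      (∀ q, p ≤ q → v q = 0) ∧
      ∀ η ζ : (Fin N → ℤ) → ℝ, Δ j η = T j (Q k j) * ζ →
        (Δ j)^[p] (T k (Q j k) * η)
          = u * η + ∑ q ∈ Finset.range p, v q * (Δ j)^[q] ζ := by
  induction p with
  | zero =>
    exact ⟨T k (Q j k), 0, fun q _ => rfl, fun η ζ _ => by simp⟩
  | succ p ih =>
    obtain ⟨u, v, hv, hid⟩ := ih
    refine ⟨Δ j u,
      fun q => match q with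
        | 0 => Δ j (v 0) + T j u * T j (Q k j)
        | (q' + 1) => Δ j (v (q' + 1)) + T j (v q'), ?_, ?_⟩
    · intro q hq
      match q with
      | 0 => omega
      | (q' + 1) =>
        have h1 : v (q' + 1) = 0 := hv _ (by omega)
        have h2 : v q' = 0 := hv _ (by omega)
        simp [h1, h2, delta_zero, T_zero]
    · intro η ζ hη
      rw [Function.iterate_succ_apply', hid η ζ hη, delta_add, delta_mul, hη, delta_sum]
      have hterm : ∀ q, Δ j (v q * (Δ j)^[q] ζ)
          = Δ j (v q) * (Δ j)^[q] ζ + T j (v q) * (Δ j)^[q + 1] ζ := by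
        intro q
        rw [delta_mul, Function.iterate_succ_apply']
      -- rewrite the sum of Δ(v q * Δ^q ζ)
      have hsum1 : ∑ q ∈ Finset.range p, Δ j (v q * (Δ j)^[q] ζ)
          = ∑ q ∈ Finset.range p, Δ j (v q) * (Δ j)^[q] ζ
            + ∑ q ∈ Finset.range p, T j (v q) * (Δ j)^[q + 1] ζ := by
        simp only [hterm]
        rw [Finset.sum_add_distrib]
      have hvp : Δ j (v p) = 0 := by rw [hv p le_rfl, delta_zero]
      have hsum2 : ∑ q ∈ Finset.range p, Δ j (v q) * (Δ j)^[q] ζ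
          = ∑ q ∈ Finset.range p, Δ j (v (q + 1)) * (Δ j)^[q + 1] ζ
            + Δ j (v 0) * (Δ j)^[0] ζ := by
        have := Finset.sum_range_succ' (fun q => Δ j (v q) * (Δ j)^[q] ζ) p
        rw [Finset.sum_range_succ] at this
        simpa [hvp] using this
      have hsum3 : ∑ q ∈ Finset.range (p + 1),
            (match q with
              | 0 => Δ j (v 0) + T j u * T j (Q k j)
              | (q' + 1) => Δ j (v (q' + 1)) + T j (v q')) * (Δ j)^[q] ζ
          = ∑ q ∈ Finset.range p, (Δ j (v (q + 1)) + T j (v q)) * (Δ j)^[q + 1] ζ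
            + (Δ j (v 0) + T j u * T j (Q k j)) * (Δ j)^[0] ζ := by
        exact Finset.sum_range_succ'
          (fun q => (match q with
              | 0 => Δ j (v 0) + T j u * T j (Q k j)
              | (q' + 1) => Δ j (v (q' + 1)) + T j (v q')) * (Δ j)^[q] ζ) p
      rw [hsum1, hsum2, hsum3]
      have hsum4 : ∑ q ∈ Finset.range p, (Δ j (v (q + 1)) + T j (v q)) * (Δ j)^[q + 1] ζ
          = ∑ q ∈ Finset.range p, Δ j (v (q + 1)) * (Δ j)^[q + 1] ζ
            + ∑ q ∈ Finset.range p, T j (v q) * (Δ j)^[q + 1] ζ := by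
        simp only [add_mul]
        rw [Finset.sum_add_distrib]
      rw [hsum4]
      simp only [Function.iterate_zero_apply]
      ring

/-! ### Determinant invariance under triangular row reduction -/

open Classical in
lemma det_eq_of_rowReduce {ι : Type*} [Fintype ι] [DecidableEq ι] (f : ι → ℕ) :
    ∀ (d : ℕ) (A B : Matrix ι ι ℝ) (c : ι → ι → ℝ),
      (∀ r s, c r s ≠ 0 → f s < f r) →
      (∀ r, A r = B r + ∑ s, c r s • B s) →
      (Finset.univ.filter (fun r => A r ≠ B r)).card ≤ d →
      A.det = B.det := by
  intro d
  induction d with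
  | zero =>
    intro A B c hc hAB hcard
    have hAB' : A = B := by
      ext r i
      by_contra h
      have hr : r ∈ Finset.univ.filter (fun r => A r ≠ B r) := by
        simp only [Finset.mem_filter, Finset.mem_univ, true_and]
        intro he
        exact h (congrFun he i)
      have := Finset.card_pos.mpr ⟨r, hr⟩
      omega
    rw [hAB']
  | succ d ih =>
    intro A B c hc hAB hcard
    set F := Finset.univ.filter (fun r => A r ≠ B r) with hF
    rcases F.eq_empty_or_nonempty with hFe | hFne
    · have hAB' : A = B := by
        ext r i
        have hr : A r = B r := by
          by_contra h
          have hr : r ∈ F := by simp [hF, h]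
          simp [hFe] at hr
        exact congrFun hr i
      rw [hAB']
    · obtain ⟨r, hrF, hrmin⟩ := F.exists_min_image f hFne
      have hAs : ∀ s, c r s ≠ 0 → A s = B s := by
        intro s hs
        by_contra hne
        have hsF : s ∈ F := by simp [hF, hne]
        exact absurd (hc r s hs) (not_lt.mpr (hrmin s hsF))
      have hcrr : c r r = 0 := by
        by_contra h; exact lt_irrefl _ (hc r r h)
      have key : B r = (1 : ℝ) • A r + ∑ s ∈ Finset.univ.erase r, (-(c r s)) • A s := by
        have h1 : ∑ s, c r s • B s = ∑ s, c r s • A s := by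
          refine Finset.sum_congr rfl (fun s _ => ?_)
          by_cases h : c r s = 0
          · simp [h]
          · rw [hAs s h]
        have h2 : ∑ s ∈ Finset.univ.erase r, (-(c r s)) • A s
            = -∑ s, c r s • A s := by
          rw [Finset.sum_erase _ (by simp [hcrr])]
          simp [neg_smul, Finset.sum_neg_distrib]
        rw [h2, one_smul]
        have h3 := hAB r
        rw [h1] at h3
        rw [h3]; abel
      have hdet : (A.updateRow r (B r)).det = A.det := by
        rw [key]
        rw [Matrix.det_updateRow_sum_aux A (Finset.univ.erase r)
          (Finset.notMem_erase r Finset.univ) (fun s => -(c r s)) 1]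
        simp
      set A' := A.updateRow r (B r) with hA'
      have hmain : A'.det = B.det := by
        refine ih A' B (fun r' s => if r' = r then 0 else c r' s) ?_ ?_ ?_
        · intro r' s h
          by_cases hr' : r' = r
          · simp [hr'] at h
          · simp only [if_neg hr'] at h
            exact hc r' s h
        · intro r'
          by_cases hr' : r' = r
          · subst hr'
            simp [hA', Matrix.updateRow_self]
          · rw [hA', Matrix.updateRow_ne hr']
            simp only [if_neg hr']
            exact hAB r'
        · have hsub : Finset.univ.filter (fun x => A' x ≠ B x) ⊆ F.erase r := by
            intro x hx
            simp only [Finset.mem_filter, Finset.mem_univ, true_and] at hx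
            have hxr : x ≠ r := by
              intro he; subst he
              exact hx (Matrix.updateRow_self)
            rw [hA', Matrix.updateRow_ne hxr] at hx
            rw [Finset.mem_erase]
            exact ⟨hxr, by simp [hF, hx]⟩
          have h1 : (Finset.univ.filter (fun x => A' x ≠ B x)).card ≤ (F.erase r).card :=
            Finset.card_le_card hsub
          have h2 : (F.erase r).card = F.card - 1 := Finset.card_erase_of_mem hrF
          have h3 : 1 ≤ F.card := Finset.card_pos.mpr hFne
          omega
      rw [← hdet]
      exact hmain

/-- Lemma 1, equation (9): `Δ_k(det 𝒲) = T_k(det 𝒲̃)`, where `𝒲̃` is obtained from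
`𝒲` by replacing the last row of the `k`-th block by `T_k^{−1} Δ_k^{m_k} ξ_k`. -/
theorem statement_15 (N : ℕ) (hN : 2 ≤ N)
    (Q : Fin N → Fin N → (Fin N → ℤ) → ℝ)
    (m : Fin N → ℕ) (hm : ∀ j, 0 < m j)
    (ξ : (Σ j : Fin N, Fin (m j)) → Fin N → (Fin N → ℤ) → ℝ)
    (hξ : ∀ a, ∀ j k : Fin N, j ≠ k → Δ k (ξ a j) = T k (Q j k) * ξ a k)
    (k : Fin N) :
    ∀ n : Fin N → ℤ,
      (Wmat m ξ (n + Pi.single k 1)).det - (Wmat m ξ n).det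
        = ((Wmat m ξ (n + Pi.single k 1)).updateRow (lastRow m k (hm k))
            (fun a => (Δ k)^[m k] (ξ a k) (n + Pi.single k 1 - Pi.single k 1))).det := by
  intro n
  have hsub : n + Pi.single k 1 - Pi.single k 1 = n := add_sub_cancel_right n _
  rw [hsub]
  set B := Wmat m ξ n with hB
  set W' := Wmat m ξ (n + Pi.single k 1) with hW'
  set L := lastRow m k (hm k) with hL
  have hL2 : ((lastRow m k (hm k)).2 : ℕ) = m k - 1 := rfl
  -- split the last row of the k-th block
  have hrowL : W' L = (fun a => (Δ k)^[m k - 1] (ξ a k) n)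
      + (fun a => (Δ k)^[m k] (ξ a k) n) := by
    funext a
    have : W' L a = (Δ k)^[m k - 1] (ξ a k) (n + Pi.single k 1) := rfl
    rw [this, iterate_shift]
    have hmk : m k - 1 + 1 = m k := Nat.succ_pred_eq_of_pos (hm k)
    rw [hmk]
    rfl
  have step1 : W'.det
      = (W'.updateRow L (fun a => (Δ k)^[m k - 1] (ξ a k) n)).det
        + (W'.updateRow L (fun a => (Δ k)^[m k] (ξ a k) n)).det := by
    rw [← Matrix.det_updateRow_add]
    rw [← hrowL, Matrix.updateRow_eq_self]
  set A := W'.updateRow L (fun a => (Δ k)^[m k - 1] (ξ a k) n) with hA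
  -- main claim : A.det = B.det
  have main : A.det = B.det := by
    choose u v hv hid using fun (j : Fin N) (p : ℕ) => exists_coeffs Q j k p
    set f : (Σ j : Fin N, Fin (m j)) → ℕ :=
      fun r => if r.1 = k then m k - 1 - (r.2 : ℕ) else m k + (r.2 : ℕ) with hf
    set c : (Σ j : Fin N, Fin (m j)) → (Σ j : Fin N, Fin (m j)) → ℝ :=
      fun r s =>
        if r.1 = k then (if s.1 = k ∧ (s.2 : ℕ) = (r.2 : ℕ) + 1 then 1 else 0)
        else (if s.1 = r.1 then v r.1 (r.2 : ℕ) (s.2 : ℕ) n else 0)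
          + (if s.1 = k ∧ (s.2 : ℕ) = 0 then u r.1 (r.2 : ℕ) n else 0) with hc
    classical
    apply det_eq_of_rowReduce f (Finset.univ.filter (fun r => A r ≠ B r)).card A B c
      ?_ ?_ le_rfl
    · -- triangularity
      rintro ⟨rj, rp⟩ ⟨sj, sp⟩ hne
      by_cases hrj : rj = k
      · subst rj
        simp only [hc, if_pos rfl] at hne
        split_ifs at hne with h
        · obtain ⟨hsj, hsp⟩ := h
          have h1 : f ⟨sj, sp⟩ = m k - 1 - (sp : ℕ) := by simp [hf, hsj]
          have h2 : f ⟨k, rp⟩ = m k - 1 - (rp : ℕ) := by simp [hf]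
          have h3 : m sj = m k := by rw [hsj]
          have h4 := sp.isLt
          rw [h1, h2]
          omega
        · exact absurd rfl hne
      · simp only [hc, if_neg hrj] at hne
        have : (if sj = rj then v rj (rp : ℕ) (sp : ℕ) n else 0) ≠ 0
            ∨ (if sj = k ∧ (sp : ℕ) = 0 then u rj (rp : ℕ) n else 0) ≠ 0 := by
          by_contra h
          push_neg at h
          rw [h.1, h.2] at hne
          simp at hne
        rcases this with h | h
        · split_ifs at h with hsj
          · subst hsj
            have hlt : (sp : ℕ) < (rp : ℕ) := by
              by_contra hge
              push_neg at hge
              rw [hv _ _ _ hge] at h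
              simp at h
            have h1 : f ⟨sj, sp⟩ = m k + (sp : ℕ) := by simp [hf, hrj]
            have h2 : f ⟨sj, rp⟩ = m k + (rp : ℕ) := by simp [hf, hrj]
            rw [h1, h2]
            omega
          · exact absurd rfl h
        · split_ifs at h with hsk
          · obtain ⟨hsj, hsp⟩ := hsk
            have h1 : f ⟨sj, sp⟩ = m k - 1 - (sp : ℕ) := by simp [hf, hsj]
            have h2 : f ⟨rj, rp⟩ = m k + (rp : ℕ) := by simp [hf, hrj]
            rw [h1, h2]
            have := hm k
            omega
          · exact absurd rfl h
    · -- the row identity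
      rintro ⟨rj, rp⟩
      funext a
      have hsum : (∑ s, c ⟨rj, rp⟩ s • B s) a
          = ∑ j' : Fin N, ∑ q : Fin (m j'), c ⟨rj, rp⟩ ⟨j', q⟩ * B ⟨j', q⟩ a := by
        rw [Finset.sum_apply]
        rw [← Finset.univ_sigma_univ, Finset.sum_sigma]
        simp [smul_eq_mul]
      by_cases hrj : rj = k
      · subst rj
        -- the k-th block
        by_cases hlast : (rp : ℕ) = m k - 1
        · -- the replaced row
          have hrL : (⟨k, rp⟩ : Σ j : Fin N, Fin (m j)) = L := by
            rw [hL]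
            unfold lastRow
            congr 1
            exact Fin.ext hlast
          have hAr : A ⟨k, rp⟩ = fun a => (Δ k)^[m k - 1] (ξ a k) n := by
            rw [hA, hrL, Matrix.updateRow_self]
          rw [Pi.add_apply, hsum, hAr]
          have hBr : B ⟨k, rp⟩ a = (Δ k)^[m k - 1] (ξ a k) n := by
            rw [hB]
            show (Δ k)^[(rp : ℕ)] (ξ a k) n = _
            rw [hlast]
          rw [hBr]
          have hzero : ∑ j' : Fin N, ∑ q : Fin (m j'), c ⟨k, rp⟩ ⟨j', q⟩ * B ⟨j', q⟩ a = 0 := by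
            refine Finset.sum_eq_zero (fun j' _ => Finset.sum_eq_zero (fun q _ => ?_))
            have : c ⟨k, rp⟩ ⟨j', q⟩ = 0 := by
              simp only [hc, if_pos rfl]
              split_ifs with h
              · obtain ⟨hj', hq⟩ := h
                subst hj'
                have := q.isLt
                omega
              · rfl
            rw [this, zero_mul]
          rw [hzero, add_zero]
        · -- a non-last row of the k-th block
          have hrL : (⟨k, rp⟩ : Σ j : Fin N, Fin (m j)) ≠ L := by
            rw [hL]
            unfold lastRow
            intro h
            have h2 : (rp : ℕ) = m k - 1 := congrArg (fun x : Σ j : Fin N, Fin (m j) => (x.2 : ℕ)) h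
            exact hlast h2
          have hlt : (rp : ℕ) + 1 < m k := by
            have := rp.isLt
            omega
          have hAr : A ⟨k, rp⟩ = W' ⟨k, rp⟩ := Matrix.updateRow_ne hrL
          rw [Pi.add_apply, hsum, hAr]
          have hWr : W' ⟨k, rp⟩ a = B ⟨k, rp⟩ a + (Δ k)^[(rp : ℕ) + 1] (ξ a k) n := by
            show (Δ k)^[(rp : ℕ)] (ξ a k) (n + Pi.single k 1) = _
            rw [iterate_shift]
            rfl
          rw [hWr]
          congr 1
          have hone : ∑ j' : Fin N, ∑ q : Fin (m j'), c ⟨k, rp⟩ ⟨j', q⟩ * B ⟨j', q⟩ a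
              = B ⟨k, ⟨(rp : ℕ) + 1, hlt⟩⟩ a := by
            rw [Finset.sum_eq_single k]
            · rw [Finset.sum_eq_single (⟨(rp : ℕ) + 1, hlt⟩ : Fin (m k))]
              · have : c ⟨k, rp⟩ ⟨k, ⟨(rp : ℕ) + 1, hlt⟩⟩ = 1 := by
                  simp [hc]
                rw [this, one_mul]
              · intro q _ hq
                have : c ⟨k, rp⟩ ⟨k, q⟩ = 0 := by
                  simp only [hc, if_pos rfl]
                  rw [if_neg]
                  rintro ⟨-, h2⟩
                  exact hq (Fin.ext h2)
                rw [this, zero_mul]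
              · intro h
                exact absurd (Finset.mem_univ _) h
            · intro j' _ hj'
              refine Finset.sum_eq_zero (fun q _ => ?_)
              have : c ⟨k, rp⟩ ⟨j', q⟩ = 0 := by
                simp only [hc, if_pos rfl]
                rw [if_neg]
                rintro ⟨h1, -⟩
                exact hj' h1
              rw [this, zero_mul]
            · intro h
              exact absurd (Finset.mem_univ _) h
          rw [hone]
          rfl
      · -- a row of the j-th block, j ≠ k
        have hrL : (⟨rj, rp⟩ : Σ j : Fin N, Fin (m j)) ≠ L := by
          rw [hL]
          unfold lastRow
          intro h
          exact hrj (congrArg (fun x : Σ j : Fin N, Fin (m j) => x.1) h)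
        have hAr : A ⟨rj, rp⟩ = W' ⟨rj, rp⟩ := Matrix.updateRow_ne hrL
        rw [Pi.add_apply, hsum, hAr]
        -- compute the left-hand side
        have hkj : k ≠ rj := fun h => hrj h.symm
        have hWr : W' ⟨rj, rp⟩ a
            = B ⟨rj, rp⟩ a + (u rj (rp : ℕ) n) * ξ a k n
              + ∑ q ∈ Finset.range (rp : ℕ), v rj (rp : ℕ) q n * (Δ rj)^[q] (ξ a rj) n := by
          have h1 : W' ⟨rj, rp⟩ a = T k ((Δ rj)^[(rp : ℕ)] (ξ a rj)) n := rfl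
          rw [h1, T_delta_iterate_comm, T_eq_add_delta, hξ a rj k hrj, delta_iterate_add,
            hid rj (rp : ℕ) (ξ a k) (ξ a rj) (hξ a k rj hkj)]
          simp [Finset.sum_apply]
          have hBval : B ⟨rj, rp⟩ a = (Δ rj)^[(rp : ℕ)] (ξ a rj) n := rfl
          rw [hBval]
          ring
        rw [hWr]
        -- compute the sum side
        have hsplit : ∑ j' : Fin N, ∑ q : Fin (m j'), c ⟨rj, rp⟩ ⟨j', q⟩ * B ⟨j', q⟩ a
            = (∑ j' : Fin N, ∑ q : Fin (m j'),
                (if j' = rj then v rj (rp : ℕ) (q : ℕ) n else 0) * B ⟨j', q⟩ a)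
              + (∑ j' : Fin N, ∑ q : Fin (m j'),
                (if j' = k ∧ (q : ℕ) = 0 then u rj (rp : ℕ) n else 0) * B ⟨j', q⟩ a) := by
          rw [← Finset.sum_add_distrib]
          refine Finset.sum_congr rfl (fun j' _ => ?_)
          rw [← Finset.sum_add_distrib]
          refine Finset.sum_congr rfl (fun q _ => ?_)
          simp only [hc, if_neg hrj]
          ring
        have hS1 : ∑ j' : Fin N, ∑ q : Fin (m j'),
              (if j' = rj then v rj (rp : ℕ) (q : ℕ) n else 0) * B ⟨j', q⟩ a
            = ∑ q ∈ Finset.range (rp : ℕ), v rj (rp : ℕ) q n * (Δ rj)^[q] (ξ a rj) n := by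
          rw [Finset.sum_eq_single rj]
          · have h1 : ∑ q : Fin (m rj),
                (if rj = rj then v rj (rp : ℕ) (q : ℕ) n else 0) * B ⟨rj, q⟩ a
                = ∑ q ∈ Finset.range (m rj), v rj (rp : ℕ) q n * (Δ rj)^[q] (ξ a rj) n := by
              rw [← Fin.sum_univ_eq_sum_range
                (fun q => v rj (rp : ℕ) q n * (Δ rj)^[q] (ξ a rj) n) (m rj)]
              refine Finset.sum_congr rfl (fun q _ => ?_)
              rw [if_pos rfl]
              rfl
            rw [h1]
            symm
            refine Finset.sum_subset (Finset.range_subset_range.mpr rp.isLt.le) (fun q _ hq => ?_)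
            have hge : (rp : ℕ) ≤ q := by
              simp only [Finset.mem_range, not_lt] at hq
              exact hq
            rw [hv rj (rp : ℕ) q hge]
            simp
          · intro j' _ hj'
            refine Finset.sum_eq_zero (fun q _ => ?_)
            rw [if_neg hj', zero_mul]
          · intro h
            exact absurd (Finset.mem_univ _) h
        have hS2 : ∑ j' : Fin N, ∑ q : Fin (m j'),
              (if j' = k ∧ (q : ℕ) = 0 then u rj (rp : ℕ) n else 0) * B ⟨j', q⟩ a
            = u rj (rp : ℕ) n * ξ a k n := by
          rw [Finset.sum_eq_single k]
          · rw [Finset.sum_eq_single (⟨0, hm k⟩ : Fin (m k))]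
            · rw [if_pos ⟨rfl, rfl⟩]
              rfl
            · intro q _ hq
              rw [if_neg, zero_mul]
              rintro ⟨-, h2⟩
              exact hq (Fin.ext h2)
            · intro h
              exact absurd (Finset.mem_univ _) h
          · intro j' _ hj'
            refine Finset.sum_eq_zero (fun q _ => ?_)
            rw [if_neg, zero_mul]
            rintro ⟨h1, -⟩
            exact hj' h1
          · intro h
            exact absurd (Finset.mem_univ _) h
        rw [hsplit, hS1, hS2]
        ring
  -- put everything together
  have goal2 : W'.det - B.det
      = (W'.updateRow L (fun a => (Δ k)^[m k] (ξ a k) n)).det := by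
    rw [step1, main]
    ring
  exact goal2
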